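/- Let α ∈ (1,2). There exists a constant C > 0 depending only on α such that whenever x, w ∈ B satisfy f(x,w) ≥ 4, then for all y, z ∈ B with y ≠ x and z ≠ w, g(x,y) g(z,w) / g(x,w) ≤ C · δ_B(y)^{(α−1)/2} δ_B(z)^{(α−1)/2} ≤ C. -/

import Mathlib

open Real Set

/-- `δ_B(x) = dist(x, ℝ∖(0,2)) = min(x, 2-x)` for `x ∈ B = (0,2)`. -/
noncomputable def deltaB (x : ℝ) : ℝ := min x (2 - x)

/-- `f(x,y) = δ_B(x)δ_B(y)/|x-y|²`. -/
noncomputable def fB (x y : ℝ) : ℝ := deltaB x * deltaB y / |x - y| ^ 2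

/-- `g(x,y) = min{(δ_B(x)δ_B(y))^{(α-1)/2}, δ_B(x)^{α/2}δ_B(y)^{α/2}/|x-y|}`, comparable to
the Green function of the symmetric α-stable process (α ∈ (1,2)) killed upon exiting `(0,2)`. -/
noncomputable def gB (α x y : ℝ) : ℝ :=
  min ((deltaB x * deltaB y) ^ ((α - 1) / 2))
    (deltaB x ^ (α / 2) * deltaB y ^ (α / 2) / |x - y|)

lemma deltaB_pos {x : ℝ} (hx : x ∈ Set.Ioo (0:ℝ) 2) : 0 < deltaB x :=
  lt_min hx.1 (by linarith [hx.2])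

lemma deltaB_le_one {x : ℝ} (hx : x ∈ Set.Ioo (0:ℝ) 2) : deltaB x ≤ 1 := by
  rcases le_total x 1 with h | h
  · exact (min_le_left _ _).trans h
  · exact (min_le_right _ _).trans (by linarith)

lemma gB_nonneg (α x y : ℝ) (hx : x ∈ Set.Ioo (0:ℝ) 2) (hy : y ∈ Set.Ioo (0:ℝ) 2) :
    0 ≤ gB α x y := by
  refine le_min (Real.rpow_nonneg ?_ _) (div_nonneg (mul_nonneg ?_ ?_) (abs_nonneg _))
  · exact mul_nonneg (deltaB_pos hx).le (deltaB_pos hy).le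
  · exact Real.rpow_nonneg (deltaB_pos hx).le _
  · exact Real.rpow_nonneg (deltaB_pos hy).le _

lemma gB_le (α x y : ℝ) : gB α x y ≤ (deltaB x * deltaB y) ^ ((α - 1) / 2) :=
  min_le_left _ _

theorem green_ratio_bound (α : ℝ) (hα : α ∈ Set.Ioo (1:ℝ) 2) :
    ∃ C : ℝ, 0 < C ∧ ∀ x ∈ Set.Ioo (0:ℝ) 2, ∀ w ∈ Set.Ioo (0:ℝ) 2, 4 ≤ fB x w →
      ∀ y ∈ Set.Ioo (0:ℝ) 2, ∀ z ∈ Set.Ioo (0:ℝ) 2, y ≠ x → z ≠ w →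
        gB α x y * gB α z w / gB α x w
            ≤ C * (deltaB y ^ ((α - 1) / 2) * deltaB z ^ ((α - 1) / 2)) ∧
        C * (deltaB y ^ ((α - 1) / 2) * deltaB z ^ ((α - 1) / 2)) ≤ C := by
  refine ⟨1, one_pos, ?_⟩
  intro x hx w hw hfw y hy z hz hyx hzw
  set p : ℝ := (α - 1) / 2 with hp
  have hp0 : 0 < p := by simp only [hp]; linarith [hα.1]
  have dx := deltaB_pos hx
  have dw := deltaB_pos hw
  have dy := deltaB_pos hy
  have dz := deltaB_pos hz
  have hpos : 0 < deltaB x * deltaB w := mul_pos dx dw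
  -- x ≠ w
  have habs : 0 < |x - w| := by
    rcases eq_or_lt_of_le (abs_nonneg (x - w)) with h | h
    · exfalso
      have : fB x w = 0 := by simp [fB, ← h]
      rw [this] at hfw; linarith
    · exact h
  -- 4|x-w|² ≤ δxδw
  have h4 : 4 * |x - w| ^ 2 ≤ deltaB x * deltaB w := by
    have := (le_div_iff₀ (by positivity : (0:ℝ) < |x - w| ^ 2)).mp hfw
    linarith
  -- |x-w| ≤ (δxδw)^{1/2}
  have hsq : |x - w| ≤ (deltaB x * deltaB w) ^ ((1:ℝ)/2) := by
    have h1 : (|x - w|) ^ (2:ℕ) ≤ ((deltaB x * deltaB w) ^ ((1:ℝ)/2)) ^ (2:ℕ) := by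
      have : ((deltaB x * deltaB w) ^ ((1:ℝ)/2)) ^ (2:ℕ)
          = deltaB x * deltaB w := by
        rw [← Real.rpow_natCast ((deltaB x * deltaB w) ^ ((1:ℝ)/2)) 2,
          ← Real.rpow_mul hpos.le]
        norm_num
      rw [this]; nlinarith
    have hR : 0 ≤ (deltaB x * deltaB w) ^ ((1:ℝ)/2) := Real.rpow_nonneg hpos.le _
    nlinarith [abs_nonneg (x - w), h1]
  -- g(x,w) equals the first term
  have key : (deltaB x * deltaB w) ^ p ≤ deltaB x ^ (α/2) * deltaB w ^ (α/2) / |x - w| := by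
    rw [← Real.mul_rpow dx.le dw.le, le_div_iff₀ habs]
    calc (deltaB x * deltaB w) ^ p * |x - w|
        ≤ (deltaB x * deltaB w) ^ p * (deltaB x * deltaB w) ^ ((1:ℝ)/2) :=
          mul_le_mul_of_nonneg_left hsq (Real.rpow_nonneg hpos.le _)
      _ = (deltaB x * deltaB w) ^ (α/2) := by
          rw [← Real.rpow_add hpos]; congr 1; rw [hp]; ring
  have hgxw : gB α x w = (deltaB x * deltaB w) ^ p := min_eq_left key
  constructor
  · rw [hgxw, div_le_iff₀ (Real.rpow_pos_of_pos hpos _), one_mul]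
    have hA : gB α x y ≤ deltaB x ^ p * deltaB y ^ p := by
      calc gB α x y ≤ (deltaB x * deltaB y) ^ p := gB_le α x y
        _ = deltaB x ^ p * deltaB y ^ p := Real.mul_rpow dx.le dy.le
    have hB : gB α z w ≤ deltaB z ^ p * deltaB w ^ p := by
      calc gB α z w ≤ (deltaB z * deltaB w) ^ p := gB_le α z w
        _ = deltaB z ^ p * deltaB w ^ p := Real.mul_rpow dz.le dw.le
    calc gB α x y * gB α z w
        ≤ (deltaB x ^ p * deltaB y ^ p) * (deltaB z ^ p * deltaB w ^ p) :=
          mul_le_mul hA hB (gB_nonneg α z w hz hw)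
            (mul_nonneg (Real.rpow_nonneg dx.le _) (Real.rpow_nonneg dy.le _))
      _ = deltaB y ^ p * deltaB z ^ p * (deltaB x * deltaB w) ^ p := by
          rw [Real.mul_rpow dx.le dw.le]; ring
  · rw [one_mul]
    have h1 : deltaB y ^ p ≤ 1 :=
      Real.rpow_le_one dy.le (deltaB_le_one hy) hp0.le
    have h2 : deltaB z ^ p ≤ 1 :=
      Real.rpow_le_one dz.le (deltaB_le_one hz) hp0.le
    calc deltaB y ^ p * deltaB z ^ p ≤ 1 * 1 :=
        mul_le_mul h1 h2 (Real.rpow_nonneg dz.le _) zero_le_one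
      _ = 1 := one_mul 1
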